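/- arXiv:1101.2478 — 4 statements merged into one kernel-verified Lean document; each statement's English description precedes it below -/
import Mathlib

section
/- Let (Ω, ℱ, ℙ) be a probability space, and let d > 0 and c > 0 be constants. For each k ∈ ℕ let S_k ≥ 0 and A_k ≥ 0 be integrable real random variables with E[A_k] ≥ c for every k. Let Z_0 = 0 and define recursively Z_{k+1} = max(Z_k + S_k − d·A_k, 0) almost surely. If the sequence (Z_K)_{K∈ℕ} is mean rate stable, then limsup_{K→∞} E[Σ_{k=0}^{K−1} S_k] / E[Σ_{k=0}^{K−1} A_k] ≤ d. -/
open MeasureTheory Filter Topology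

/-- Virtual delay queue lemma: if the virtual queue `Z` driven by delays `S`,
arrival counts `A` and bound `d` is mean rate stable, then the time-average
delay ratio is at most `d`. -/
theorem stmt0
    {Ω : Type*} [MeasurableSpace Ω] (ℙ : Measure Ω) [IsProbabilityMeasure ℙ]
    (d c : ℝ) (hd : 0 < d) (hc : 0 < c)
    (S A Z : ℕ → Ω → ℝ)
    (hS_int : ∀ k, Integrable (S k) ℙ) (hA_int : ∀ k, Integrable (A k) ℙ)
    (hZ_int : ∀ k, Integrable (Z k) ℙ)
    (hS_nonneg : ∀ k, 0 ≤ᵐ[ℙ] S k) (hA_nonneg : ∀ k, 0 ≤ᵐ[ℙ] A k)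
    (hA_mean : ∀ k, c ≤ ∫ ω, A k ω ∂ℙ)
    (hZ0 : ∀ᵐ ω ∂ℙ, Z 0 ω = 0)
    (hZrec : ∀ k, ∀ᵐ ω ∂ℙ, Z (k + 1) ω = max (Z k ω + S k ω - d * A k ω) 0)
    (hmrs : Tendsto (fun K : ℕ => (∫ ω, Z K ω ∂ℙ) / K) atTop (nhds 0)) :
    Filter.limsup (fun K : ℕ =>
      (∫ ω, ∑ k ∈ Finset.range K, S k ω ∂ℙ) /
      (∫ ω, ∑ k ∈ Finset.range K, A k ω ∂ℙ)) atTop ≤ d := by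
  -- notation
  set f : ℕ → ℝ := fun K => ∫ ω, ∑ k ∈ Finset.range K, S k ω ∂ℙ with hf
  set g : ℕ → ℝ := fun K => ∫ ω, ∑ k ∈ Finset.range K, A k ω ∂ℙ with hg
  have hfS : ∀ K, f K = ∑ k ∈ Finset.range K, ∫ ω, S k ω ∂ℙ := by
    intro K; simp only [hf]
    exact integral_finset_sum _ (fun k _ => hS_int k)
  have hgA : ∀ K, g K = ∑ k ∈ Finset.range K, ∫ ω, A k ω ∂ℙ := by
    intro K; simp only [hg]
    exact integral_finset_sum _ (fun k _ => hA_int k)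
  -- Z K ≥ 0 a.e.
  have hZnn : ∀ K, 0 ≤ ∫ ω, Z K ω ∂ℙ := by
    intro K
    cases K with
    | zero =>
        have : ∫ ω, Z 0 ω ∂ℙ = 0 := by
          rw [integral_congr_ae hZ0]; simp
        linarith
    | succ k =>
        refine integral_nonneg_of_ae ?_
        filter_upwards [hZrec k] with ω hω
        rw [hω]; exact le_max_right _ _
  -- key inequality
  have key : ∀ K, f K ≤ (∫ ω, Z K ω ∂ℙ) + d * g K := by
    intro K
    induction K with
    | zero =>
        simp only [hf, hg, Finset.range_zero, Finset.sum_empty, integral_zero, mul_zero, add_zero]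
        exact hZnn 0
    | succ K ih =>
        have hsumS : f (K + 1) = f K + ∫ ω, S K ω ∂ℙ := by
          rw [hfS, hfS, Finset.sum_range_succ]
        have hsumA : g (K + 1) = g K + ∫ ω, A K ω ∂ℙ := by
          rw [hgA, hgA, Finset.sum_range_succ]
        have hstep : (∫ ω, Z K ω ∂ℙ) + (∫ ω, S K ω ∂ℙ) - d * ∫ ω, A K ω ∂ℙ
            ≤ ∫ ω, Z (K + 1) ω ∂ℙ := by
          have h1 : ∫ ω, (Z K ω + S K ω - d * A K ω) ∂ℙ ≤ ∫ ω, Z (K + 1) ω ∂ℙ := by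
            refine integral_mono_ae ?_ (hZ_int (K + 1)) ?_
            · exact ((hZ_int K).add (hS_int K)).sub ((hA_int K).const_mul d)
            · filter_upwards [hZrec K] with ω hω
              rw [hω]; exact le_max_left _ _
          have h2 : ∫ ω, (Z K ω + S K ω - d * A K ω) ∂ℙ
              = (∫ ω, Z K ω ∂ℙ) + (∫ ω, S K ω ∂ℙ) - d * ∫ ω, A K ω ∂ℙ := by
            rw [integral_sub (((hZ_int K).add (hS_int K)).congr (Eventually.of_forall fun ω => rfl) :
                Integrable (fun ω => Z K ω + S K ω) ℙ)
                (((hA_int K).const_mul d).congr (Eventually.of_forall fun ω => rfl) :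
                Integrable (fun ω => d * A K ω) ℙ),
              integral_add (hZ_int K) (hS_int K), integral_const_mul]
          linarith
        rw [hsumS, hsumA]; nlinarith
  -- g K ≥ c * K
  have hgK : ∀ K : ℕ, c * K ≤ g K := by
    intro K
    rw [hgA]
    calc c * K = ∑ _k ∈ Finset.range K, c := by simp [mul_comm]
    _ ≤ _ := Finset.sum_le_sum (fun k _ => hA_mean k)
  -- f K ≥ 0, g K ≥ 0
  have hfnn : ∀ K, 0 ≤ f K := by
    intro K; rw [hfS]
    exact Finset.sum_nonneg fun k _ => integral_nonneg_of_ae (hS_nonneg k)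
  have hgnn : ∀ K, 0 ≤ g K := by
    intro K; rw [hgA]
    exact Finset.sum_nonneg fun k _ => integral_nonneg_of_ae (hA_nonneg k)
  -- the bounding sequence
  set v : ℕ → ℝ := fun K => (∫ ω, Z K ω ∂ℙ) / (c * K) + d with hv
  have hbound : ∀ K : ℕ, 1 ≤ K → f K / g K ≤ v K := by
    intro K hK
    have hK0 : (0:ℝ) < K := by exact_mod_cast hK
    have hcK : (0:ℝ) < c * K := mul_pos hc hK0
    have hgpos : 0 < g K := lt_of_lt_of_le hcK (hgK K)
    rw [div_le_iff₀ hgpos]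
    have h1 : (∫ ω, Z K ω ∂ℙ) ≤ (∫ ω, Z K ω ∂ℙ) / (c * K) * g K := by
      rw [div_mul_eq_mul_div, le_div_iff₀ hcK]
      exact mul_le_mul_of_nonneg_left (hgK K) (hZnn K)
    calc f K ≤ (∫ ω, Z K ω ∂ℙ) + d * g K := key K
    _ ≤ (∫ ω, Z K ω ∂ℙ) / (c * K) * g K + d * g K := by linarith
    _ = v K * g K := by ring
  -- v tends to d
  have hvlim : Tendsto v atTop (nhds d) := by
    have h1 : Tendsto (fun K : ℕ => (∫ ω, Z K ω ∂ℙ) / (c * K)) atTop (nhds 0) := by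
      have := hmrs.div_const c
      simp only [zero_div] at this
      refine this.congr fun K => ?_
      rw [div_div, mul_comm]
    have := h1.add (tendsto_const_nhds (x := d))
    simpa using this
  -- conclude
  have : limsup (fun K => f K / g K) atTop ≤ limsup v atTop := by
    refine limsup_le_limsup ?_ ?_ ?_
    · filter_upwards [eventually_ge_atTop 1] with K hK using hbound K hK
    · exact isCoboundedUnder_le_of_eventually_le atTop (x := 0)
        (Eventually.of_forall fun K => div_nonneg (hfnn K) (hgnn K))
    · exact hvlim.isBoundedUnder_le
  rw [hvlim.limsup_eq] at this
  exact this
end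

section
/- Let (Ω, ℱ, ℙ) be a probability space, and let P_const > 0 and c > 0 be constants. For each k ∈ ℕ let E_k ≥ 0 (energy consumed in frame k) and T_k ≥ 0 (frame size) be integrable real random variables with E[T_k] ≥ c for every k. Let X_0 = 0 and define recursively X_{k+1} = max(X_k + E_k − P_const·T_k, 0) almost surely. If the sequence (X_K)_{K∈ℕ} is mean rate stable, then limsup_{K→∞} E[Σ_{k=0}^{K−1} E_k] / E[Σ_{k=0}^{K−1} T_k] ≤ P_const. -/
open MeasureTheory Filter Topology

/-- Virtual power queue lemma: if the virtual power queue `X` driven by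
per-frame energies `E` and frame sizes `T` with power bound `Pconst` is mean
rate stable, then the time-average power is at most `Pconst`. -/
theorem stmt1
    {Ω : Type*} [MeasurableSpace Ω] (ℙ : Measure Ω) [IsProbabilityMeasure ℙ]
    (Pconst c : ℝ) (hP : 0 < Pconst) (hc : 0 < c)
    (E T X : ℕ → Ω → ℝ)
    (hE_int : ∀ k, Integrable (E k) ℙ) (hT_int : ∀ k, Integrable (T k) ℙ)
    (hX_int : ∀ k, Integrable (X k) ℙ)
    (hE_nonneg : ∀ k, 0 ≤ᵐ[ℙ] E k) (hT_nonneg : ∀ k, 0 ≤ᵐ[ℙ] T k)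
    (hT_mean : ∀ k, c ≤ ∫ ω, T k ω ∂ℙ)
    (hX0 : ∀ᵐ ω ∂ℙ, X 0 ω = 0)
    (hXrec : ∀ k, ∀ᵐ ω ∂ℙ, X (k + 1) ω = max (X k ω + E k ω - Pconst * T k ω) 0)
    (hmrs : Tendsto (fun K : ℕ => (∫ ω, X K ω ∂ℙ) / K) atTop (nhds 0)) :
    Filter.limsup (fun K : ℕ =>
      (∫ ω, ∑ k ∈ Finset.range K, E k ω ∂ℙ) /
      (∫ ω, ∑ k ∈ Finset.range K, T k ω ∂ℙ)) atTop ≤ Pconst := by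
  -- a.e. lower bound on X K
  have hlow : ∀ K : ℕ, ∀ᵐ ω ∂ℙ,
      (∑ k ∈ Finset.range K, (E k ω - Pconst * T k ω)) ≤ X K ω ∧ 0 ≤ X K ω := by
    intro K
    induction K with
    | zero =>
      filter_upwards [hX0] with ω h0
      simp [h0]
    | succ K ih =>
      filter_upwards [ih, hXrec K] with ω ⟨h1, h2⟩ hrec
      rw [hrec]
      constructor
      · rw [Finset.sum_range_succ]
        exact le_max_of_le_left (by linarith)
      · exact le_max_right _ _
  set f : ℕ → ℝ := fun K =>
      (∫ ω, ∑ k ∈ Finset.range K, E k ω ∂ℙ) /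
      (∫ ω, ∑ k ∈ Finset.range K, T k ω ∂ℙ) with hf
  set g : ℕ → ℝ := fun K => Pconst + ((∫ ω, X K ω ∂ℙ) / K) / c with hg
  have key : ∀ K : ℕ, 1 ≤ K → 0 ≤ f K ∧ f K ≤ g K := by
    intro K hK
    have hEsum : Integrable (fun ω => ∑ k ∈ Finset.range K, E k ω) ℙ :=
      integrable_finset_sum _ (fun k _ => hE_int k)
    have hTsum : Integrable (fun ω => ∑ k ∈ Finset.range K, T k ω) ℙ :=
      integrable_finset_sum _ (fun k _ => hT_int k)
    have hNint : (∫ ω, ∑ k ∈ Finset.range K, E k ω ∂ℙ)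
        = ∑ k ∈ Finset.range K, ∫ ω, E k ω ∂ℙ :=
      integral_finset_sum _ (fun k _ => hE_int k)
    have hDint : (∫ ω, ∑ k ∈ Finset.range K, T k ω ∂ℙ)
        = ∑ k ∈ Finset.range K, ∫ ω, T k ω ∂ℙ :=
      integral_finset_sum _ (fun k _ => hT_int k)
    set N := ∫ ω, ∑ k ∈ Finset.range K, E k ω ∂ℙ
    set D := ∫ ω, ∑ k ∈ Finset.range K, T k ω ∂ℙ
    set IX := ∫ ω, X K ω ∂ℙ
    have hNnn : 0 ≤ N := by
      apply integral_nonneg_of_ae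
      have : ∀ᵐ ω ∂ℙ, ∀ k ∈ Finset.range K, 0 ≤ E k ω := by
        rw [Filter.eventually_all_finset]
        exact fun k _ => hE_nonneg k
      filter_upwards [this] with ω h
      exact Finset.sum_nonneg h
    have hDge : c * K ≤ D := by
      rw [hDint]
      calc c * K = ∑ _k ∈ Finset.range K, c := by
            simp [mul_comm]
        _ ≤ _ := Finset.sum_le_sum (fun k _ => hT_mean k)
    have hKpos : (0:ℝ) < K := by exact_mod_cast hK
    have hDpos : 0 < D := lt_of_lt_of_le (by positivity) hDge
    have hIXnn : 0 ≤ IX := by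
      apply integral_nonneg_of_ae
      filter_upwards [hlow K] with ω h using h.2
    have hNle : N ≤ IX + Pconst * D := by
      have hint : Integrable (fun ω => ∑ k ∈ Finset.range K, (E k ω - Pconst * T k ω)) ℙ :=
        integrable_finset_sum _ (fun k _ => (hE_int k).sub ((hT_int k).const_mul _))
      have h1 : (∫ ω, ∑ k ∈ Finset.range K, (E k ω - Pconst * T k ω) ∂ℙ) ≤ IX := by
        apply integral_mono_ae hint (hX_int K)
        filter_upwards [hlow K] with ω h using h.1
      have h2 : (∫ ω, ∑ k ∈ Finset.range K, (E k ω - Pconst * T k ω) ∂ℙ)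
          = N - Pconst * D := by
        have heq : (fun ω => ∑ k ∈ Finset.range K, (E k ω - Pconst * T k ω))
            = fun ω => (∑ k ∈ Finset.range K, E k ω)
              - Pconst * ∑ k ∈ Finset.range K, T k ω := by
          funext ω; rw [Finset.sum_sub_distrib, Finset.mul_sum]
        rw [heq, integral_sub hEsum (hTsum.const_mul _), integral_const_mul]
      rw [h2] at h1
      linarith
    constructor
    · exact div_nonneg hNnn hDpos.le
    · show N / D ≤ Pconst + (IX / K) / c
      have h3 : N / D ≤ Pconst + IX / D := by
        rw [div_le_iff₀ hDpos, add_mul, div_mul_cancel₀ _ hDpos.ne']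
        linarith
      have h4 : IX / D ≤ IX / (c * K) := by
        apply div_le_div_of_nonneg_left hIXnn (by positivity) hDge
      have h5 : IX / (c * (K:ℝ)) = (IX / K) / c := by
        rw [div_div, mul_comm]
      linarith
  have hfg : f ≤ᶠ[atTop] g := by
    filter_upwards [eventually_ge_atTop 1] with K hK using (key K hK).2
  have hgP : Tendsto g atTop (nhds Pconst) := by
    have : Tendsto (fun K : ℕ => Pconst + ((∫ ω, X K ω ∂ℙ) / K) / c) atTop
        (nhds (Pconst + 0 / c)) :=
      tendsto_const_nhds.add (hmrs.div_const c)
    simpa using this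
  have hcob : IsCoboundedUnder (· ≤ ·) atTop f := by
    apply isCoboundedUnder_le_of_eventually_le atTop (x := 0)
    filter_upwards [eventually_ge_atTop 1] with K hK using (key K hK).1
  have hbdd : IsBoundedUnder (· ≤ ·) atTop g := hgP.isBoundedUnder_le
  calc limsup f atTop ≤ limsup g atTop := limsup_le_limsup hfg hcob hbdd
    _ = Pconst := hgP.limsup_eq
end

section
/- Let (Ω, ℱ, ℙ) be a probability space, f : ℝ → ℝ a convex function, and K ∈ ℕ with K ≥ 1. For each k ∈ Fin K let r_k be an integrable real random variable and T_k a nonnegative integrable real random variable such that r_k and T_k are independent and f(r_k)·T_k and r_k·T_k are integrable. If Σ_{k} E[T_k] > 0, then Σ_{k} E[f(r_k)·T_k] / Σ_{k} E[T_k] ≥ f( Σ_{k} E[r_k·T_k] / Σ_{k} E[T_k] ). -/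
open MeasureTheory

/-- Frame-weighted Jensen inequality: for convex `f`, auxiliary variables
`r k` independent of the nonnegative frame sizes `T k`, the weighted average
penalty dominates the penalty of the weighted average. -/
theorem stmt6
    {Ω : Type*} [MeasurableSpace Ω] (ℙ : Measure Ω) [IsProbabilityMeasure ℙ]
    (f : ℝ → ℝ) (hf : ConvexOn ℝ Set.univ f)
    (K : ℕ) (hK : 1 ≤ K)
    (r T : Fin K → Ω → ℝ)
    (hrint : ∀ k, Integrable (r k) ℙ)
    (hTint : ∀ k, Integrable (T k) ℙ)
    (hTnn : ∀ k, 0 ≤ᵐ[ℙ] T k)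
    (hindep : ∀ k, ProbabilityTheory.IndepFun (r k) (T k) ℙ)
    (hfrT : ∀ k, Integrable (fun ω => f (r k ω) * T k ω) ℙ)
    (hrT : ∀ k, Integrable (fun ω => r k ω * T k ω) ℙ)
    (hpos : 0 < ∑ k, ∫ ω, T k ω ∂ℙ) :
    f ((∑ k, ∫ ω, r k ω * T k ω ∂ℙ) / (∑ k, ∫ ω, T k ω ∂ℙ)) ≤
      (∑ k, ∫ ω, f (r k ω) * T k ω ∂ℙ) / (∑ k, ∫ ω, T k ω ∂ℙ) := by
  have hfc : Continuous f := continuousOn_univ.mp (hf.continuousOn isOpen_univ)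
  set a : Fin K → ℝ := fun k => ∫ ω, r k ω ∂ℙ with ha
  set w : Fin K → ℝ := fun k => ∫ ω, T k ω ∂ℙ with hw
  have hwnn : ∀ k, 0 ≤ w k := fun k => integral_nonneg_of_ae (hTnn k)
  have hmul : ∀ k, ∫ ω, r k ω * T k ω ∂ℙ = a k * w k := by
    intro k
    exact (hindep k).integral_fun_mul_eq_mul_integral (hrint k).1 (hTint k).1
  -- key per-frame inequality
  have key : ∀ k, f (a k) * w k ≤ ∫ ω, f (r k ω) * T k ω ∂ℙ := by
    intro k
    by_cases hzero : w k = 0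
    · have hT0 : T k =ᵐ[ℙ] 0 := by
        have := (integral_eq_zero_iff_of_nonneg_ae (hTnn k) (hTint k)).mp hzero
        exact this
      have : (fun ω => f (r k ω) * T k ω) =ᵐ[ℙ] 0 := by
        filter_upwards [hT0] with ω hω
        simp [hω]
      rw [integral_eq_zero_of_ae this, hzero, mul_zero]
    · have hTne : ¬ (T k =ᵐ[ℙ] 0) := by
        intro h
        exact hzero (integral_eq_zero_of_ae h)
      have hindep' : ProbabilityTheory.IndepFun (fun ω => f (r k ω)) (T k) ℙ :=
        (hindep k).comp hfc.measurable measurable_id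
      have hfrmeas : AEStronglyMeasurable (fun ω => f (r k ω)) ℙ :=
        hfc.comp_aestronglyMeasurable (hrint k).1
      have hfrint : Integrable (fun ω => f (r k ω)) ℙ := by
        refine hindep'.integrable_left_of_integrable_op (fun x y => x * y) 1 one_ne_zero
          (by intro x y; simp [enorm_mul]) ?_ hfrmeas (hTint k).1 hTne
        exact hfrT k
      have hjensen : f (a k) ≤ ∫ ω, f (r k ω) ∂ℙ := by
        have := hf.map_average_le hfc.continuousOn isClosed_univ
          (Filter.Eventually.of_forall fun ω => Set.mem_univ (r k ω)) (hrint k) hfrint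
        simpa [average_eq_integral] using this
      have heq : ∫ ω, f (r k ω) * T k ω ∂ℙ = (∫ ω, f (r k ω) ∂ℙ) * w k :=
        hindep'.integral_fun_mul_eq_mul_integral hfrmeas (hTint k).1
      rw [heq]
      exact mul_le_mul_of_nonneg_right hjensen (hwnn k)
  set S := ∑ k, w k with hS
  have hjensen2 : f ((∑ k, a k * w k) / S) ≤ (∑ k, w k * f (a k)) / S := by
    have := hf.map_centerMass_le (t := Finset.univ) (w := w) (p := a)
      (fun i _ => hwnn i) hpos (fun i _ => Set.mem_univ _)
    rw [Finset.centerMass] at this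
    simp only [smul_eq_mul, Function.comp] at this
    have h1 : (∑ k, a k * w k) / S = S⁻¹ * ∑ k, w k * a k := by
      rw [div_eq_inv_mul]
      congr 1
      exact Finset.sum_congr rfl fun k _ => mul_comm _ _
    have h2 : (∑ k, w k * f (a k)) / S = S⁻¹ * ∑ k, w k * f (a k) := div_eq_inv_mul _ _
    rw [h1, h2]
    exact this
  calc f ((∑ k, ∫ ω, r k ω * T k ω ∂ℙ) / S)
      = f ((∑ k, a k * w k) / S) := by
        congr 1
        rw [Finset.sum_congr rfl fun k _ => hmul k]
    _ ≤ (∑ k, w k * f (a k)) / S := hjensen2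
    _ ≤ (∑ k, ∫ ω, f (r k ω) * T k ω ∂ℙ) / S := by
        gcongr with k
        exact (mul_comm (w k) (f (a k))) ▸ key k
end

section
/- Let N ∈ ℕ with N ≥ 1, and let b : Finset (Fin N) → ℝ satisfy b(∅) = 0 and be supermodular: b(S ∪ T) + b(S ∩ T) ≥ b(S) + b(T) for all S, T ⊆ Fin N. Define Ω := { x : Fin N → ℝ | for every S ⊆ Fin N, Σ_{i∈S} x_i ≥ b(S), and Σ_{i∈Fin N} x_i = b(Fin N) }. Let c : Fin N → ℝ be nonnegative and nonincreasing (c_m ≥ c_n whenever m ≤ n), and define x* : Fin N → ℝ by x*_n := b({0, 1, …, n}) − b({0, 1, …, n−1}). Then x* ∈ Ω and Σ_n c_n x*_n ≤ Σ_n c_n x_n for every x ∈ Ω. -/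
/-- Polymatroid greedy (cμ-rule) theorem: for a supermodular `b` with
`b ∅ = 0` and nonincreasing nonnegative costs `c`, the greedy vertex
`x* n = b(Iic n) - b(Iio n)` lies in the base `Ω` and minimizes the linear
cost `Σ c n x n` over `Ω`. -/
theorem stmt11
    (N : ℕ) (hN : 1 ≤ N)
    (b : Finset (Fin N) → ℝ) (hb0 : b ∅ = 0)
    (hsuper : ∀ S T : Finset (Fin N), b S + b T ≤ b (S ∪ T) + b (S ∩ T))
    (Om : Set (Fin N → ℝ))
    (hOm : Om = {x | (∀ S : Finset (Fin N), b S ≤ ∑ i ∈ S, x i) ∧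
      ∑ i, x i = b Finset.univ})
    (c : Fin N → ℝ) (hc : ∀ n, 0 ≤ c n) (hmono : Antitone c)
    (xstar : Fin N → ℝ)
    (hx : ∀ n, xstar n = b (Finset.Iic n) - b (Finset.Iio n)) :
    xstar ∈ Om ∧ ∀ x ∈ Om, ∑ n, c n * xstar n ≤ ∑ n, c n * x n := by
  classical
  set A : ℕ → Finset (Fin N) := fun k => Finset.univ.filter (fun i => (i : ℕ) < k) with hA
  have hAIio : ∀ (k : ℕ) (h : k < N), Finset.Iio (⟨k, h⟩ : Fin N) = A k := by
    intro k h
    ext i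
    simp [hA, Fin.lt_def]
  have hAIic : ∀ (k : ℕ) (h : k < N), Finset.Iic (⟨k, h⟩ : Fin N) = A (k + 1) := by
    intro k h
    ext i
    simp [hA, Fin.le_def, Nat.lt_succ_iff]
  have hAuniv : A N = Finset.univ := by
    ext i; simp [hA, i.isLt]
  have hAins : ∀ (k : ℕ) (h : k < N), A (k + 1) = insert (⟨k, h⟩ : Fin N) (A k) := by
    intro k h
    ext i
    simp [hA, Nat.lt_succ_iff_lt_or_eq, Fin.ext_iff, or_comm]
    omega
  have hAnotmem : ∀ (k : ℕ) (h : k < N), (⟨k, h⟩ : Fin N) ∉ A k := by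
    intro k h
    simp [hA]
  -- generic reindexing lemma
  have key : ∀ (f : Fin N → ℝ) (k : ℕ), k ≤ N →
      ∑ j ∈ Finset.range k, (if h : j < N then f ⟨j, h⟩ else 0) = ∑ i ∈ A k, f i := by
    intro f k
    induction k with
    | zero => intro _; simp [hA]
    | succ k ih =>
      intro hk
      have hkN : k < N := hk
      rw [Finset.sum_range_succ, ih (le_of_lt hkN), hAins k hkN,
        Finset.sum_insert (hAnotmem k hkN), dif_pos hkN]
      ring
  -- telescoping
  have htel : ∀ k : ℕ, k ≤ N → ∑ i ∈ A k, xstar i = b (A k) := by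
    intro k
    induction k with
    | zero =>
      intro _
      have : A 0 = ∅ := by ext i; simp [hA]
      simp [this, hb0]
    | succ k ih =>
      intro hk
      have hkN : k < N := hk
      rw [hAins k hkN, Finset.sum_insert (hAnotmem k hkN), ih (le_of_lt hkN), hx ⟨k, hkN⟩,
        hAIic k hkN, hAIio k hkN, hAins k hkN]
      ring
  -- feasibility of every set constraint
  have hsum : ∀ S : Finset (Fin N), b S ≤ ∑ i ∈ S, xstar i := by
    intro S
    induction S using Finset.strongInduction with
    | _ S ih =>
      rcases S.eq_empty_or_nonempty with rfl | hS
      · simp [hb0]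
      · set m := S.max' hS with hm
        have hmS : m ∈ S := S.max'_mem hS
        have hmax : ∀ i ∈ S, i ≤ m := fun i hi => S.le_max' i hi
        have hU : S ∪ Finset.Iio m = Finset.Iic m := by
          ext i
          simp only [Finset.mem_union, Finset.mem_Iio, Finset.mem_Iic]
          constructor
          · rintro (h | h)
            · exact hmax i h
            · exact le_of_lt h
          · intro h
            rcases lt_or_eq_of_le h with h' | h'
            · exact Or.inr h'
            · exact Or.inl (h' ▸ hmS)
        have hI : S ∩ Finset.Iio m = S.erase m := by
          ext i
          simp only [Finset.mem_inter, Finset.mem_Iio, Finset.mem_erase]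
          constructor
          · rintro ⟨h1, h2⟩; exact ⟨ne_of_lt h2, h1⟩
          · rintro ⟨h1, h2⟩; exact ⟨h2, lt_of_le_of_ne (hmax i h2) h1⟩
        have hsup := hsuper S (Finset.Iio m)
        rw [hU, hI] at hsup
        have hxm : xstar m = b (Finset.Iic m) - b (Finset.Iio m) := hx m
        have hih : b (S.erase m) ≤ ∑ i ∈ S.erase m, xstar i :=
          ih (S.erase m) (Finset.erase_ssubset hmS)
        have hsplit : ∑ i ∈ S, xstar i = xstar m + ∑ i ∈ S.erase m, xstar i :=
          (Finset.add_sum_erase S xstar hmS).symm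
        linarith
  have htot : ∑ i, xstar i = b Finset.univ := by
    have := htel N le_rfl
    rwa [hAuniv] at this
  refine ⟨by rw [hOm]; exact ⟨hsum, htot⟩, ?_⟩
  intro x hxOm
  rw [hOm] at hxOm
  obtain ⟨hge, hxtot⟩ := hxOm
  set y : Fin N → ℝ := fun i => x i - xstar i with hy
  have hgoal : 0 ≤ ∑ n, c n * y n := by
    set f : ℕ → ℝ := fun j => if h : j < N then c ⟨j, h⟩ else 0 with hf
    set g : ℕ → ℝ := fun j => if h : j < N then y ⟨j, h⟩ else 0 with hg
    have hP : ∀ k : ℕ, k ≤ N → 0 ≤ ∑ j ∈ Finset.range k, g j := by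
      intro k hk
      rw [hg, key y k hk]
      have : ∑ i ∈ A k, y i = (∑ i ∈ A k, x i) - ∑ i ∈ A k, xstar i := by
        simp [hy, Finset.sum_sub_distrib]
      rw [this, htel k hk]
      have := hge (A k)
      linarith
    have hPN : ∑ j ∈ Finset.range N, g j = 0 := by
      rw [hg, key y N le_rfl, hAuniv]
      have : ∑ i, y i = (∑ i, x i) - ∑ i, xstar i := by
        simp [hy, Finset.sum_sub_distrib]
      rw [this, htot, hxtot]
      ring
    have hre : ∑ n, c n * y n = ∑ j ∈ Finset.range N, f j * g j := by
      rw [show (Finset.univ : Finset (Fin N)) = A N from hAuniv.symm,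
        ← key (fun i => c i * y i) N le_rfl]
      apply Finset.sum_congr rfl
      intro j hj
      have hjN : j < N := Finset.mem_range.mp hj
      simp [hf, hg, hjN]
    rw [hre]
    have habel := Finset.sum_range_by_parts f g N
    simp only [smul_eq_mul] at habel
    rw [habel, hPN, mul_zero, zero_sub, le_neg, neg_zero]
    apply Finset.sum_nonpos
    intro i hi
    have hiN : i < N - 1 := Finset.mem_range.mp hi
    have hi1N : i + 1 < N := by omega
    have hiN' : i < N := by omega
    have hfle : f (i + 1) - f i ≤ 0 := by
      have : c ⟨i + 1, hi1N⟩ ≤ c ⟨i, hiN'⟩ := hmono (by simp [Fin.le_def])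
      simp [hf, hi1N, hiN']
      linarith
    exact mul_nonpos_of_nonpos_of_nonneg hfle (hP (i + 1) (le_of_lt hi1N))
  have : ∑ n, c n * x n - ∑ n, c n * xstar n = ∑ n, c n * y n := by
    simp [hy, Finset.sum_sub_distrib, mul_sub]
  linarith
end
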